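/- For even n ≥ 4, p(C_n; z) = u_{n+1}(1, z) + z·u_{n-1}(1, z) − z^{n/2}. -/

import Mathlib

open Polynomial

variable {V : Type*}

/-- `M` (a finite set of edges) is a matching of the graph `G`:
its members are edges of `G` and no two distinct members share an endpoint. -/
def IsGraphMatching (G : SimpleGraph V) (M : Finset (Sym2 V)) : Prop :=
  (M : Set (Sym2 V)) ⊆ G.edgeSet ∧
    ∀ e ∈ M, ∀ f ∈ M, e ≠ f → ∀ x, x ∈ e → x ∉ f

/-- The set of vertices covered by the edge set `M` is exactly `S`. -/
def Covers (M : Finset (Sym2 V)) (S : Finset V) : Prop :=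
  ∀ x, x ∈ S ↔ ∃ e ∈ M, x ∈ e

/-- `M` is a perfect matching of the induced subgraph `G[S]`. -/
def IsPerfectMatchingOn (G : SimpleGraph V) (M : Finset (Sym2 V)) (S : Finset V) : Prop :=
  IsGraphMatching G M ∧ Covers M S

/-- `S` is a perfectly matchable set of `G`. -/
def IsPMS (G : SimpleGraph V) (S : Finset V) : Prop :=
  ∃ M, IsPerfectMatchingOn G M S

open Classical in
/-- The perfectly matchable set polynomial of the subgraph of `G` induced on the
ground vertex set `A`: the generating function `∑ p_{2k} z^k` where `p_{2k}` is the number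
of perfectly matchable sets `S ⊆ A` with `|S| = 2k`. -/
noncomputable def pmPoly [Fintype V] (G : SimpleGraph V) (A : Finset V) : Polynomial ℤ :=
  ∑ S ∈ A.powerset, if IsPMS G S then X ^ (S.card / 2) else 0

/-- `G` has no cycle of even length. -/
def NoEvenCycle (G : SimpleGraph V) : Prop :=
  ∀ (v : V) (c : G.Walk v v), c.IsCycle → ¬ Even c.length

/-- The Hoggatt–Long polynomials `u_n(x, y)`: `u₀ = 0`, `u₁ = 1`,
`u_n = x·u_{n−1} + y·u_{n−2}` (evaluated at elements of a commutative ring). -/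
def hoggattLong {R : Type*} [CommRing R] (x y : R) : ℕ → R
  | 0 => 0
  | 1 => 1
  | (n + 2) => x * hoggattLong x y (n + 1) + y * hoggattLong x y n

open Finset
section MyAux


def NoAdjN (T : Finset ℕ) : Prop := ∀ i ∈ T, i + 1 ∉ T

instance : DecidablePred NoAdjN := fun _ => Finset.decidableDforallFinset

noncomputable def gsum (m : ℕ) : Polynomial ℤ :=
  ∑ T ∈ (Finset.range m).powerset.filter NoAdjN, X ^ T.card

lemma gsum_zero : gsum 0 = 1 := by
  rw [gsum]
  rw [show filter NoAdjN (Finset.range 0).powerset = {∅} by decide]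
  simp

lemma gsum_one : gsum 1 = 1 + X := by
  rw [gsum]
  rw [show filter NoAdjN (Finset.range 1).powerset = {∅, {0}} by decide]
  rw [Finset.sum_insert (by decide), Finset.sum_singleton]
  simp

lemma gsum_eq_ite (m : ℕ) :
    gsum m = ∑ T ∈ (Finset.range m).powerset, if NoAdjN T then X ^ T.card else 0 :=
  Finset.sum_filter _ _

lemma noAdjN_insert_top {m : ℕ} {T : Finset ℕ} (hT : T ⊆ Finset.range (m + 1)) :
    NoAdjN (insert (m + 1) T) ↔ NoAdjN T ∧ m ∉ T := by
  constructor
  · intro h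
    refine ⟨fun i hi hi1 => h i (Finset.mem_insert_of_mem hi) (Finset.mem_insert_of_mem hi1), ?_⟩
    intro hm
    exact h m (Finset.mem_insert_of_mem hm) (Finset.mem_insert_self _ _)
  · rintro ⟨h, hm⟩ i hi hi1
    rcases Finset.mem_insert.1 hi with rfl | hi
    · rcases Finset.mem_insert.1 hi1 with h2 | h2
      · omega
      · have := Finset.mem_range.1 (hT h2); omega
    · rcases Finset.mem_insert.1 hi1 with h2 | h2
      · have : i = m := by omega
        exact hm (this ▸ hi)
      · exact h i hi h2

lemma gsum_rec (m : ℕ) : gsum (m + 2) = gsum (m + 1) + X * gsum m := by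
  rw [gsum_eq_ite (m+2), show Finset.range (m+2) = insert (m+1) (Finset.range (m+1)) by
    rw [Finset.range_add_one]]
  rw [Finset.sum_powerset_insert (by simp)]
  congr 1
  · exact (gsum_eq_ite (m+1)).symm
  · -- second term
    have step1 : ∀ T ∈ (Finset.range (m+1)).powerset,
        (if NoAdjN (insert (m+1) T) then (X : Polynomial ℤ) ^ (insert (m+1) T).card else 0)
        = if NoAdjN T ∧ m ∉ T then X ^ (T.card + 1) else 0 := by
      intro T hT
      rw [Finset.mem_powerset] at hT
      rw [if_congr (noAdjN_insert_top hT) rfl rfl]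
      congr 1
      rw [Finset.card_insert_of_notMem (fun h => by have := hT h; simp at this)]
    rw [Finset.sum_congr rfl step1]
    rw [show Finset.range (m+1) = insert m (Finset.range m) by rw [Finset.range_add_one]]
    rw [Finset.sum_powerset_insert (by simp)]
    have h2 : ∀ T ∈ (Finset.range m).powerset,
        (if NoAdjN (insert m T) ∧ m ∉ insert m T then (X : Polynomial ℤ) ^ ((insert m T).card + 1) else 0) = 0 := by
      intro T _
      rw [if_neg]
      simp
    rw [Finset.sum_congr rfl h2, Finset.sum_const_zero, add_zero]
    have h3 : ∀ T ∈ (Finset.range m).powerset,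
        (if NoAdjN T ∧ m ∉ T then (X : Polynomial ℤ) ^ (T.card + 1) else 0)
        = X * (if NoAdjN T then X ^ T.card else 0) := by
      intro T hT
      rw [Finset.mem_powerset] at hT
      have hm : m ∉ T := fun h => by have := hT h; simp at this
      rw [if_congr (and_iff_left hm) rfl rfl]
      split <;> ring
    rw [Finset.sum_congr rfl h3, ← Finset.mul_sum, ← gsum_eq_ite]

lemma gsum_eq_hl : ∀ m, gsum m = hoggattLong 1 X (m + 2) := by
  intro m
  induction m using Nat.strong_induction_on with
  | _ m ih =>
    match m with
    | 0 => rw [gsum_zero]; show (1 : Polynomial ℤ) = 1 * 1 + X * 0; ring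
    | 1 => rw [gsum_one]; show (1 + X : Polynomial ℤ) = 1 * (1 * 1 + X * 0) + X * 1; ring
    | (k + 2) =>
      rw [gsum_rec, ih (k+1) (by omega), ih k (by omega)]
      show _ = 1 * hoggattLong 1 X (k + 3) + X * hoggattLong 1 X (k + 2)
      ring

def CycN (n : ℕ) (T : Finset ℕ) : Prop := ∀ i ∈ T, (i + 1) % n ∉ T

instance : ∀ n, DecidablePred (CycN n) := fun _ _ => Finset.decidableDforallFinset

noncomputable def ncyc (n : ℕ) : Polynomial ℤ :=
  ∑ T ∈ (Finset.range n).powerset.filter (CycN n), X ^ T.card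

lemma shift_sum (m : ℕ) :
    ∑ T ∈ (Finset.range (m+1)).powerset.filter (fun T => NoAdjN T ∧ 0 ∉ T),
      (X : Polynomial ℤ) ^ T.card = gsum m := by
  rw [gsum]
  refine Finset.sum_nbij' (fun T => T.image (· - 1)) (fun T => T.image (· + 1)) ?_ ?_ ?_ ?_ ?_
  · intro T hT
    rw [Finset.mem_filter, Finset.mem_powerset] at hT
    obtain ⟨hsub, hna, h0⟩ := hT
    have hge : ∀ i ∈ T, 1 ≤ i := by
      intro i hi
      rcases Nat.eq_zero_or_pos i with rfl | h
      · exact absurd hi h0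
      · exact h
    rw [Finset.mem_filter, Finset.mem_powerset]
    constructor
    · intro a ha
      rw [Finset.mem_image] at ha
      obtain ⟨i, hi, rfl⟩ := ha
      have := Finset.mem_range.1 (hsub hi)
      have := hge i hi
      rw [Finset.mem_range]
      omega
    · intro a ha ha1
      rw [Finset.mem_image] at ha ha1
      obtain ⟨i, hi, hie⟩ := ha
      obtain ⟨j, hj, hje⟩ := ha1
      have h1 := hge i hi
      have h2 := hge j hj
      have : j = i + 1 := by omega
      exact hna i hi (this ▸ hj)
  · intro T hT
    rw [Finset.mem_filter, Finset.mem_powerset] at hT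
    obtain ⟨hsub, hna⟩ := hT
    rw [Finset.mem_filter, Finset.mem_powerset]
    refine ⟨?_, ?_, ?_⟩
    · intro a ha
      rw [Finset.mem_image] at ha
      obtain ⟨i, hi, rfl⟩ := ha
      have := Finset.mem_range.1 (hsub hi)
      rw [Finset.mem_range]; omega
    · intro a ha ha1
      rw [Finset.mem_image] at ha ha1
      obtain ⟨i, hi, hie⟩ := ha
      obtain ⟨j, hj, hje⟩ := ha1
      have : j = i + 1 := by omega
      exact hna i hi (this ▸ hj)
    · intro h0
      rw [Finset.mem_image] at h0
      obtain ⟨i, _, hie⟩ := h0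
      omega
  · intro T hT
    rw [Finset.mem_filter, Finset.mem_powerset] at hT
    obtain ⟨hsub, hna, h0⟩ := hT
    show Finset.image (fun x : ℕ => x + 1) (Finset.image (fun x : ℕ => x - 1) T) = T
    rw [Finset.image_image]
    rw [show ((fun x : ℕ => x + 1) ∘ (fun x : ℕ => x - 1) : ℕ → ℕ) = fun x => (x - 1) + 1 from rfl]
    have : ∀ x ∈ T, x - 1 + 1 = id x := by
      intro x hx
      rcases Nat.eq_zero_or_pos x with rfl | h
      · exact absurd hx h0
      · simp; omega
    rw [Finset.image_congr this, Finset.image_id]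
  · intro T _
    show Finset.image (fun x : ℕ => x - 1) (Finset.image (fun x : ℕ => x + 1) T) = T
    rw [Finset.image_image]
    rw [show ((fun x : ℕ => x - 1) ∘ (fun x : ℕ => x + 1) : ℕ → ℕ) = fun x => x + 1 - 1 from rfl]
    have : ∀ x ∈ T, x + 1 - 1 = id x := fun x _ => by simp
    rw [Finset.image_congr this, Finset.image_id]
  · intro T hT
    rw [Finset.mem_filter, Finset.mem_powerset] at hT
    obtain ⟨hsub, hna, h0⟩ := hT
    congr 1
    rw [Finset.card_image_of_injOn]
    intro i hi j hj hij
    simp only at hij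
    have h1 : 1 ≤ i := Nat.pos_of_ne_zero (fun h => h0 (h ▸ hi))
    have h2 : 1 ≤ j := Nat.pos_of_ne_zero (fun h => h0 (h ▸ hj))
    omega

lemma ncyc_eq (k : ℕ) : ncyc (k + 4) = gsum (k + 3) + X * gsum (k + 1) := by
  rw [ncyc, Finset.sum_filter, show Finset.range (k+4) = insert (k+3) (Finset.range (k+3)) by
    rw [Finset.range_add_one]]
  rw [Finset.sum_powerset_insert (by simp)]
  congr 1
  · -- term 1 : subsets of range (k+3)
    rw [gsum_eq_ite]
    refine Finset.sum_congr rfl fun T hT => ?_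
    rw [Finset.mem_powerset] at hT
    refine if_congr ⟨fun h i hi hi1 => ?_, fun h i hi => ?_⟩ rfl rfl
    · have := h i hi
      have hlt := Finset.mem_range.1 (hT hi)
      rw [Nat.mod_eq_of_lt (by omega)] at this
      exact this hi1
    · have hlt := Finset.mem_range.1 (hT hi)
      rw [Nat.mod_eq_of_lt (by omega)]
      exact h i hi
  · -- term 2
    have step1 : ∀ T ∈ (Finset.range (k+3)).powerset,
        (if CycN (k+4) (insert (k+3) T) then (X : Polynomial ℤ) ^ (insert (k+3) T).card else 0)
        = if NoAdjN T ∧ k+2 ∉ T ∧ 0 ∉ T then X ^ (T.card + 1) else 0 := by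
      intro T hT
      rw [Finset.mem_powerset] at hT
      have hnk : (k+3) ∉ T := fun h => by have := Finset.mem_range.1 (hT h); omega
      have hiff : CycN (k+4) (insert (k+3) T) ↔ (NoAdjN T ∧ k+2 ∉ T ∧ 0 ∉ T) := ?_
      · rw [if_congr hiff rfl rfl, Finset.card_insert_of_notMem hnk]
      constructor
      · intro h
        have h0 : 0 ∉ T := by
          have := h (k+3) (Finset.mem_insert_self _ _)
          rw [Nat.mod_self] at this
          exact fun hh => this (Finset.mem_insert_of_mem hh)
        refine ⟨fun i hi hi1 => ?_, fun hk => ?_, h0⟩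
        · have hlt := Finset.mem_range.1 (hT hi)
          have := h i (Finset.mem_insert_of_mem hi)
          rw [Nat.mod_eq_of_lt (by omega)] at this
          exact this (Finset.mem_insert_of_mem hi1)
        · have := h (k+2) (Finset.mem_insert_of_mem hk)
          rw [Nat.mod_eq_of_lt (by omega)] at this
          exact this (Finset.mem_insert_self _ _)
      · rintro ⟨hna, hk2, h0⟩ i hi hi1
        rcases Finset.mem_insert.1 hi with rfl | hi
        · rw [Nat.mod_self] at hi1
          rcases Finset.mem_insert.1 hi1 with h2 | h2
          · omega
          · exact h0 h2
        · have hlt := Finset.mem_range.1 (hT hi)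
          rw [Nat.mod_eq_of_lt (by omega)] at hi1
          rcases Finset.mem_insert.1 hi1 with h2 | h2
          · have : i = k + 2 := by omega
            exact absurd (this ▸ hi) hk2
          · exact hna i hi h2
    rw [Finset.sum_congr rfl step1]
    rw [show Finset.range (k+3) = insert (k+2) (Finset.range (k+2)) by rw [Finset.range_add_one]]
    rw [Finset.sum_powerset_insert (by simp)]
    have h2 : ∀ T ∈ (Finset.range (k+2)).powerset,
        (if NoAdjN (insert (k+2) T) ∧ k+2 ∉ insert (k+2) T ∧ 0 ∉ insert (k+2) T
          then (X : Polynomial ℤ) ^ ((insert (k+2) T).card + 1) else 0) = 0 := by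
      intro T _
      rw [if_neg]
      rintro ⟨-, h, -⟩
      exact h (Finset.mem_insert_self _ _)
    rw [Finset.sum_congr rfl h2, Finset.sum_const_zero, add_zero]
    have h3 : ∀ T ∈ (Finset.range (k+2)).powerset,
        (if NoAdjN T ∧ k+2 ∉ T ∧ 0 ∉ T then (X : Polynomial ℤ) ^ (T.card + 1) else 0)
        = X * (if NoAdjN T ∧ 0 ∉ T then X ^ T.card else 0) := by
      intro T hT
      rw [Finset.mem_powerset] at hT
      have hk2 : k+2 ∉ T := fun h => by have := Finset.mem_range.1 (hT h); omega
      have hiff : (NoAdjN T ∧ k+2 ∉ T ∧ 0 ∉ T) ↔ (NoAdjN T ∧ 0 ∉ T) := by tauto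
      rw [if_congr hiff rfl rfl]
      split <;> ring
    rw [Finset.sum_congr rfl h3, ← Finset.mul_sum, ← Finset.sum_filter, shift_sum]

-- Fin side
def CycInd {n : ℕ} [NeZero n] (M : Finset (Fin n)) : Prop := ∀ i ∈ M, i + 1 ∉ M

instance {n : ℕ} [NeZero n] : DecidablePred (CycInd (n := n)) :=
  fun _ => Finset.decidableDforallFinset

def phiF {n : ℕ} [NeZero n] (M : Finset (Fin n)) : Finset (Fin n) := M ∪ M.image (· + 1)

noncomputable def csum (n : ℕ) [NeZero n] : Polynomial ℤ :=
  ∑ M ∈ (Finset.univ : Finset (Fin n)).powerset.filter CycInd, X ^ M.card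

section FinStuff

open scoped Fin.NatCast Fin.CommRing

variable {k : ℕ}

lemma val_one' : (1 : Fin (k + 4)).val = 1 := rfl

lemma val_add_one (i : Fin (k + 4)) : (i + 1).val = (i.val + 1) % (k + 4) := by
  rw [Fin.add_def, val_one']

lemma finSubAddCancel (x : Fin (k + 4)) : (x - 1) + 1 = x := by ring

lemma mem_phiF {M : Finset (Fin (k + 4))} {x : Fin (k + 4)} :
    x ∈ phiF M ↔ x ∈ M ∨ x - 1 ∈ M := by
  rw [phiF, Finset.mem_union, Finset.mem_image]
  constructor
  · rintro (h | ⟨i, hi, rfl⟩)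
    · exact Or.inl h
    · right; rwa [add_sub_cancel_right]
  · rintro (h | h)
    · exact Or.inl h
    · exact Or.inr ⟨x - 1, h, finSubAddCancel x⟩

lemma subset_phiF {M : Finset (Fin (k + 4))} : M ⊆ phiF M := Finset.subset_union_left

lemma phiF_card {M : Finset (Fin (k + 4))} (hM : CycInd M) : (phiF M).card = 2 * M.card := by
  rw [phiF, Finset.card_union_of_disjoint, Finset.card_image_of_injective _ (add_left_injective 1)]
  · ring
  · rw [Finset.disjoint_right]
    rintro x hx hx2
    rw [Finset.mem_image] at hx
    obtain ⟨i, hi, rfl⟩ := hx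
    exact hM i hi hx2

lemma cast_two_succ (i : Fin (k + 4)) (m : ℕ) :
    i + ((2 * (m + 1) : ℕ) : Fin (k + 4)) = (i + ((2 * m : ℕ) : Fin (k + 4))) + 2 := by
  push_cast
  ring

lemma step3 {M₁ M₂ : Finset (Fin (k + 4))} (h1 : CycInd M₁) (h2 : CycInd M₂)
    (hp : phiF M₁ = phiF M₂) {j : Fin (k + 4)} (hj1 : j ∈ M₁) (hj2 : j ∉ M₂) :
    j + 1 ∈ M₂ ∧ (j + 2 ∈ M₁ ∧ j + 2 ∉ M₂) := by
  have ha : j + 1 ∈ phiF M₂ := by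
    rw [← hp, mem_phiF, add_sub_cancel_right]
    exact Or.inr hj1
  rw [mem_phiF, add_sub_cancel_right] at ha
  have hA : j + 1 ∈ M₂ := ha.resolve_right hj2
  have hB : j + 2 ∉ M₂ := by
    have := h2 (j + 1) hA
    rwa [add_assoc, show (1 : Fin (k+4)) + 1 = 2 by norm_num] at this
  have hC : j + 2 ∈ M₁ := by
    have hm : j + 2 ∈ phiF M₁ := by
      rw [hp, mem_phiF]
      right
      rw [show j + 2 - 1 = j + 1 by ring]
      exact hA
    rw [mem_phiF, show j + 2 - 1 = j + 1 by ring] at hm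
    exact hm.resolve_right (h1 j hj1)
  exact ⟨hA, hC, hB⟩

lemma prop3 {M₁ M₂ : Finset (Fin (k + 4))} (h1 : CycInd M₁) (h2 : CycInd M₂)
    (hp : phiF M₁ = phiF M₂) {i : Fin (k + 4)} (hi1 : i ∈ M₁) (hi2 : i ∉ M₂) :
    ∀ m : ℕ, i + ((2 * m : ℕ) : Fin (k + 4)) ∈ M₁ ∧ i + ((2 * m : ℕ) : Fin (k + 4)) ∉ M₂ := by
  intro m
  induction m with
  | zero => simpa using ⟨hi1, hi2⟩
  | succ m ih =>
    rw [cast_two_succ]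
    exact (step3 h1 h2 hp ih.1 ih.2).2

lemma L3univ {M₁ M₂ : Finset (Fin (k + 4))} (h1 : CycInd M₁) (h2 : CycInd M₂)
    (hp : phiF M₁ = phiF M₂) {i : Fin (k + 4)} (hi1 : i ∈ M₁) (hi2 : i ∉ M₂) :
    phiF M₁ = Finset.univ := by
  apply Finset.eq_univ_of_forall
  intro j
  have hj : i + (((j - i).val : ℕ) : Fin (k + 4)) = j := by
    rw [Fin.cast_val_eq_self, add_sub_cancel]
  rcases Nat.even_or_odd (j - i).val with ⟨t, ht⟩ | ⟨t, ht⟩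
  · have := (prop3 h1 h2 hp hi1 hi2 t).1
    rw [show 2 * t = (j - i).val by omega, hj] at this
    exact subset_phiF this
  · have hstep := (step3 h1 h2 hp (prop3 h1 h2 hp hi1 hi2 t).1 (prop3 h1 h2 hp hi1 hi2 t).2).1
    have : i + ((2 * t : ℕ) : Fin (k + 4)) + 1 = j := by
      rw [← hj, show (j - i).val = 2 * t + 1 by omega]
      push_cast
      ring
    rw [this] at hstep
    rw [hp]
    exact subset_phiF hstep

lemma L3inj {M₁ M₂ : Finset (Fin (k + 4))} (h1 : CycInd M₁) (h2 : CycInd M₂)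
    (hp : phiF M₁ = phiF M₂) (hne : phiF M₁ ≠ Finset.univ) : M₁ = M₂ := by
  by_contra hMM
  rcases Finset.not_subset.1 (fun hss => hMM (Finset.Subset.antisymm hss (fun x hx => by
      by_contra hx1
      exact hne (hp ▸ L3univ h2 h1 hp.symm hx hx1)))) with ⟨i, hi1, hi2⟩
  · exact hne (L3univ h1 h2 hp hi1 hi2)

def Eset (k : ℕ) : Finset (Fin (k + 4)) := Finset.univ.filter (fun j => j.val % 2 = 0)
def Oset (k : ℕ) : Finset (Fin (k + 4)) := Finset.univ.filter (fun j => j.val % 2 = 1)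

lemma mem_Eset {j : Fin (k + 4)} : j ∈ Eset k ↔ j.val % 2 = 0 := by
  simp [Eset]

lemma mem_Oset {j : Fin (k + 4)} : j ∈ Oset k ↔ j.val % 2 = 1 := by
  simp [Oset]

lemma val_add_one_mod2 (hke : k % 2 = 0) (i : Fin (k + 4)) :
    (i + 1).val % 2 = (i.val + 1) % 2 := by
  rw [val_add_one, Nat.mod_mod_of_dvd _ (by omega)]

lemma val_sub_one {j : Fin (k + 4)} (hj : j ≠ 0) : (j - 1).val = j.val - 1 := by
  rw [Fin.coe_sub_one, if_neg hj]

lemma val_zero_sub_one : ((0 : Fin (k + 4)) - 1).val = k + 3 := by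
  rw [Fin.coe_sub_one, if_pos rfl]

lemma cycInd_Eset (hke : k % 2 = 0) : CycInd (Eset k) := by
  intro i hi hi1
  rw [mem_Eset] at hi hi1
  rw [val_add_one_mod2 hke] at hi1
  omega

lemma cycInd_Oset (hke : k % 2 = 0) : CycInd (Oset k) := by
  intro i hi hi1
  rw [mem_Oset] at hi hi1
  rw [val_add_one_mod2 hke] at hi1
  omega

lemma phiF_Eset (hke : k % 2 = 0) : phiF (Eset k) = Finset.univ := by
  apply Finset.eq_univ_of_forall
  intro j
  rw [mem_phiF, mem_Eset, mem_Eset]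
  rcases Nat.eq_zero_or_pos (j.val % 2) with h | h
  · exact Or.inl h
  · right
    have hj : j ≠ 0 := fun hh => by rw [hh] at h; simp at h
    rw [val_sub_one hj]
    have := j.isLt
    omega
lemma phiF_Oset (hke : k % 2 = 0) : phiF (Oset k) = Finset.univ := by
  apply Finset.eq_univ_of_forall
  intro j
  rw [mem_phiF, mem_Oset, mem_Oset]
  rcases Nat.eq_zero_or_pos (j.val % 2) with h | h
  · right
    rcases eq_or_ne j 0 with rfl | hj
    · rw [val_zero_sub_one]; omega
    · rw [val_sub_one hj]
      have : j.val ≠ 0 := fun hh => hj (Fin.ext hh)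
      omega
  · exact Or.inl (by omega)

lemma Eset_ne_Oset : Eset k ≠ Oset k := by
  intro h
  have h0 : (0 : Fin (k + 4)) ∈ Eset k := mem_Eset.2 (by simp)
  rw [h, mem_Oset] at h0
  simp at h0

lemma card_Oset (hke : k % 2 = 0) : (Oset k).card = (k + 4) / 2 := by
  have himg : (Eset k).image (· + 1) = Oset k := by
    apply Finset.Subset.antisymm
    · intro x hx
      rw [Finset.mem_image] at hx
      obtain ⟨i, hi, rfl⟩ := hx
      rw [mem_Eset] at hi
      rw [mem_Oset, val_add_one_mod2 hke]
      omega
    · intro j hj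
      rw [mem_Oset] at hj
      have hj0 : j ≠ 0 := fun hh => by rw [hh] at hj; simp at hj
      rw [Finset.mem_image]
      refine ⟨j - 1, ?_, finSubAddCancel j⟩
      rw [mem_Eset, val_sub_one hj0]
      omega
  have hcard : (Eset k).card = (Oset k).card := by
    rw [← himg, Finset.card_image_of_injective _ (add_left_injective 1)]
  have huniv : Eset k ∪ Oset k = Finset.univ := by
    apply Finset.eq_univ_of_forall
    intro j
    rw [Finset.mem_union, mem_Eset, mem_Oset]
    omega
  have hdisj : Disjoint (Eset k) (Oset k) := by
    rw [Finset.disjoint_left]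
    intro a ha ha2
    rw [mem_Eset] at ha
    rw [mem_Oset] at ha2
    omega
  have := Finset.card_union_of_disjoint hdisj
  rw [huniv, Finset.card_univ, Fintype.card_fin] at this
  omega

lemma L4class (hke : k % 2 = 0) {M : Finset (Fin (k + 4))} (hM : CycInd M)
    (hp : phiF M = Finset.univ) : M = Eset k ∨ M = Oset k := by
  have hclos : ∀ j ∈ M, ∀ m : ℕ, j + ((2 * m : ℕ) : Fin (k + 4)) ∈ M := by
    intro j hj m
    induction m with
    | zero => simpa using hj
    | succ m ih =>
      rw [cast_two_succ]
      have h2 : j + ((2 * m : ℕ) : Fin (k + 4)) + 2 ∈ Finset.univ := Finset.mem_univ _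
      rw [← hp, mem_phiF] at h2
      rcases h2 with h2 | h2
      · exact h2
      · exfalso
        rw [show j + ((2 * m : ℕ) : Fin (k + 4)) + 2 - 1
            = j + ((2 * m : ℕ) : Fin (k + 4)) + 1 by ring] at h2
        exact hM _ ih h2
  have hpar : ∀ i₀ ∈ M, ∀ j : Fin (k + 4), j.val % 2 = i₀.val % 2 → j ∈ M := by
    intro i₀ hi₀ j hpj
    have hme : (j - i₀).val % 2 = 0 := by
      rw [Fin.sub_def]
      rw [Nat.mod_mod_of_dvd _ (by omega)]
      have := i₀.isLt
      have := j.isLt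
      omega
    have hj : i₀ + (((j - i₀).val : ℕ) : Fin (k + 4)) = j := by
      rw [Fin.cast_val_eq_self, add_sub_cancel]
    have := hclos i₀ hi₀ ((j - i₀).val / 2)
    rwa [show 2 * ((j - i₀).val / 2) = (j - i₀).val by omega, hj] at this
  have hne : M.Nonempty := by
    have h0 : (0 : Fin (k + 4)) ∈ Finset.univ := Finset.mem_univ _
    rw [← hp, mem_phiF] at h0
    rcases h0 with h0 | h0
    · exact ⟨_, h0⟩
    · exact ⟨_, h0⟩
  obtain ⟨i₀, hi₀⟩ := hne
  have hsub : ∀ j ∈ M, j.val % 2 = i₀.val % 2 := by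
    intro j hj
    by_contra hcon
    have h1 : (i₀ + 1).val % 2 = j.val % 2 := by
      rw [val_add_one_mod2 hke]
      omega
    exact hM i₀ hi₀ (hpar j hj _ h1)
  rcases Nat.eq_zero_or_pos (i₀.val % 2) with h | h
  · left
    apply Finset.Subset.antisymm
    · intro j hj
      rw [mem_Eset]
      rw [hsub j hj]
      exact h
    · intro j hj
      rw [mem_Eset] at hj
      exact hpar i₀ hi₀ j (by omega)
  · right
    apply Finset.Subset.antisymm
    · intro j hj
      rw [mem_Oset, hsub j hj]
      omega
    · intro j hj
      rw [mem_Oset] at hj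
      exact hpar i₀ hi₀ j (by omega)

lemma val_two' : (2 : Fin (k + 4)).val = 2 := rfl

lemma finOneNeZero : (1 : Fin (k + 4)) ≠ 0 := by
  intro h
  have := congrArg Fin.val h
  rw [val_one'] at this
  simp at this

lemma finTwoNeZero : (2 : Fin (k + 4)) ≠ 0 := by
  intro h
  have := congrArg Fin.val h
  rw [val_two'] at this
  simp at this

lemma cg_adj {u v : Fin (k + 4)} :
    (SimpleGraph.cycleGraph (k + 4)).Adj u v ↔ u - v = 1 ∨ v - u = 1 :=
  SimpleGraph.cycleGraph_adj

lemma cg_adj_succ (i : Fin (k + 4)) : (SimpleGraph.cycleGraph (k + 4)).Adj i (i + 1) := by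
  rw [cg_adj]
  right
  rw [add_sub_cancel_left]

lemma isPMS_iff {S : Finset (Fin (k + 4))} :
    IsPMS (SimpleGraph.cycleGraph (k + 4)) S ↔ ∃ M, CycInd M ∧ phiF M = S := by
  constructor
  · rintro ⟨Me, ⟨hsub, hdisj⟩, hcov⟩
    refine ⟨Finset.univ.filter (fun i => s(i, i + 1) ∈ Me), ?_, ?_⟩
    · intro i hi hi1
      rw [Finset.mem_filter] at hi hi1
      have hef : (s(i, i + 1) : Sym2 (Fin (k+4))) ≠ s(i + 1, i + 1 + 1) := by
        intro hh
        rw [Sym2.eq_iff] at hh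
        rcases hh with ⟨h1, -⟩ | ⟨h1, -⟩
        · exact finOneNeZero (by rwa [left_eq_add] at h1)
        · rw [add_assoc, show (1 : Fin (k+4)) + 1 = 2 by norm_num, left_eq_add] at h1
          exact finTwoNeZero h1

      exact hdisj _ hi.2 _ hi1.2 hef (i + 1) (Sym2.mem_mk_right _ _) (Sym2.mem_mk_left _ _)
    · have rep : ∀ e ∈ Me, ∃ i, s(i, i + 1) ∈ Me ∧ e = s(i, i + 1) := by
        intro e
        induction e using Sym2.ind with
        | _ u v =>
          intro he
          have hadj := hsub he
          rw [SimpleGraph.mem_edgeSet, cg_adj] at hadj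
          rcases hadj with h | h
          · rw [sub_eq_iff_eq_add] at h
            refine ⟨v, ?_, ?_⟩ <;>
              rw [show v + 1 = u by rw [h]; ring, Sym2.eq_swap] <;> first | exact he | rfl
          · rw [sub_eq_iff_eq_add] at h
            refine ⟨u, ?_, ?_⟩ <;>
              rw [show u + 1 = v by rw [h]; ring] <;> first | exact he | rfl
      apply Finset.Subset.antisymm
      · intro x hx
        rw [mem_phiF] at hx
        rw [hcov]
        rcases hx with hx | hx
        · rw [Finset.mem_filter] at hx
          exact ⟨_, hx.2, Sym2.mem_mk_left _ _⟩
        · rw [Finset.mem_filter] at hx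
          refine ⟨_, hx.2, ?_⟩
          rw [finSubAddCancel]
          exact Sym2.mem_mk_right _ _
      · intro x hx
        rw [hcov] at hx
        obtain ⟨e, he, hxe⟩ := hx
        obtain ⟨i, hiM, rfl⟩ := rep e he
        rw [mem_phiF]
        rw [Sym2.mem_iff] at hxe
        rcases hxe with rfl | rfl
        · exact Or.inl (Finset.mem_filter.2 ⟨Finset.mem_univ _, hiM⟩)
        · refine Or.inr ?_
          rw [add_sub_cancel_right]
          exact Finset.mem_filter.2 ⟨Finset.mem_univ _, hiM⟩
  · rintro ⟨M, hM, rfl⟩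
    refine ⟨M.image (fun i => s(i, i + 1)), ⟨?_, ?_⟩, ?_⟩
    · intro e he
      rw [Finset.coe_image, Set.mem_image] at he
      obtain ⟨i, -, rfl⟩ := he
      exact cg_adj_succ i
    · intro e he f hf hef x hxe hxf
      rw [Finset.mem_image] at he hf
      obtain ⟨i, hi, rfl⟩ := he
      obtain ⟨j, hj, rfl⟩ := hf
      rw [Sym2.mem_iff] at hxe hxf
      rcases hxe with rfl | rfl <;> rcases hxf with h | h
      · exact hef (by rw [h])
      · exact hM j hj (h ▸ hi)
      · exact hM i hi (h ▸ hj)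
      · exact hef (by rw [add_right_cancel h])
    · intro x
      rw [mem_phiF]
      constructor
      · rintro (hx | hx)
        · exact ⟨s(x, x + 1), Finset.mem_image_of_mem _ hx, Sym2.mem_mk_left _ _⟩
        · refine ⟨s(x - 1, x - 1 + 1), Finset.mem_image_of_mem _ hx, ?_⟩
          rw [finSubAddCancel]
          exact Sym2.mem_mk_right _ _
      · rintro ⟨e, he, hxe⟩
        rw [Finset.mem_image] at he
        obtain ⟨i, hi, rfl⟩ := he
        rw [Sym2.mem_iff] at hxe
        rcases hxe with rfl | rfl
        · exact Or.inl hi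
        · right
          rw [add_sub_cancel_right]
          exact hi

lemma csum_eq_ncyc : csum (k + 4) = ncyc (k + 4) := by
  rw [csum, ncyc]
  refine Finset.sum_nbij' (fun M => M.image Fin.val)
    (fun T : Finset ℕ => T.image (fun a : ℕ => (a : Fin (k + 4)))) ?_ ?_ ?_ ?_ ?_
  · intro M hM
    rw [Finset.mem_filter, Finset.mem_powerset] at hM
    obtain ⟨-, hci⟩ := hM
    rw [Finset.mem_filter, Finset.mem_powerset]
    constructor
    · intro a ha
      rw [Finset.mem_image] at ha
      obtain ⟨i, -, rfl⟩ := ha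
      exact Finset.mem_range.2 i.isLt
    · intro a ha hb
      rw [Finset.mem_image] at ha hb
      obtain ⟨i, hi, rfl⟩ := ha
      obtain ⟨j, hj, hje⟩ := hb
      have : j = i + 1 := by
        apply Fin.ext
        rw [val_add_one, hje]
      exact hci i hi (this ▸ hj)
  · intro T hT
    rw [Finset.mem_filter, Finset.mem_powerset] at hT
    obtain ⟨hsub, hcy⟩ := hT
    rw [Finset.mem_filter, Finset.mem_powerset]
    refine ⟨fun x _ => Finset.mem_univ x, ?_⟩
    intro i hi hi1
    rw [Finset.mem_image] at hi hi1
    obtain ⟨a, ha, hae⟩ := hi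
    obtain ⟨b, hb, hbe⟩ := hi1
    have hal := Finset.mem_range.1 (hsub ha)
    have hbl := Finset.mem_range.1 (hsub hb)
    have hav : (i : Fin (k + 4)).val = a := by rw [← hae, Fin.val_cast_of_lt hal]
    have hbv : b = (a + 1) % (k + 4) := by
      have := congrArg Fin.val hbe
      rw [Fin.val_cast_of_lt hbl, val_add_one, hav] at this
      exact this
    exact hcy a ha (hbv ▸ hb)
  · intro M _
    show Finset.image (fun a : ℕ => (a : Fin (k+4))) (Finset.image Fin.val M) = M
    rw [Finset.image_image]
    have : ∀ x ∈ M, ((fun a : ℕ => (a : Fin (k+4))) ∘ Fin.val) x = id x := fun x _ =>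
      Fin.cast_val_eq_self x
    rw [Finset.image_congr this, Finset.image_id]
  · intro T hT
    rw [Finset.mem_filter, Finset.mem_powerset] at hT
    show Finset.image Fin.val (Finset.image (fun a : ℕ => (a : Fin (k+4))) T) = T
    rw [Finset.image_image]
    have : ∀ a ∈ T, (Fin.val ∘ (fun a : ℕ => (a : Fin (k+4)))) a = id a := fun a ha =>
      Fin.val_cast_of_lt (Finset.mem_range.1 (hT.1 ha))
    rw [Finset.image_congr this, Finset.image_id]
  · intro M _
    rw [Finset.card_image_of_injective _ Fin.val_injective]

end FinStuff


end MyAux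

theorem stmt11 (n : ℕ) (hn : 4 ≤ n) (heven : Even n) :
    pmPoly (SimpleGraph.cycleGraph n) Finset.univ =
      hoggattLong (1 : Polynomial ℤ) X (n + 1) + X * hoggattLong (1 : Polynomial ℤ) X (n - 1) -
        X ^ (n / 2) := by
  classical
  obtain ⟨k, rfl⟩ : ∃ k, n = k + 4 := ⟨n - 4, by omega⟩
  have hke : k % 2 = 0 := by
    obtain ⟨r, hr⟩ := heven
    omega
  have hstep1 : pmPoly (SimpleGraph.cycleGraph (k + 4)) Finset.univ
      = ∑ S ∈ Finset.univ.powerset.filter (IsPMS (SimpleGraph.cycleGraph (k + 4))),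
          (X : Polynomial ℤ) ^ (S.card / 2) := by
    rw [pmPoly, Finset.sum_filter]
  have hstep2 : ∑ M ∈ ((Finset.univ : Finset (Fin (k+4))).powerset.filter CycInd).erase (Oset k),
        (X : Polynomial ℤ) ^ M.card
      = ∑ S ∈ Finset.univ.powerset.filter (IsPMS (SimpleGraph.cycleGraph (k + 4))),
          (X : Polynomial ℤ) ^ (S.card / 2) := by
    refine Finset.sum_bij (fun M _ => phiF M) ?_ ?_ ?_ ?_
    · intro M hM
      rw [Finset.mem_erase, Finset.mem_filter, Finset.mem_powerset] at hM
      obtain ⟨-, -, hci⟩ := hM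
      rw [Finset.mem_filter, Finset.mem_powerset]
      exact ⟨Finset.subset_univ _, isPMS_iff.2 ⟨M, hci, rfl⟩⟩
    · intro M₁ hM₁ M₂ hM₂ hp
      replace hp : phiF M₁ = phiF M₂ := hp
      rw [Finset.mem_erase, Finset.mem_filter, Finset.mem_powerset] at hM₁ hM₂
      obtain ⟨hne₁, -, hci₁⟩ := hM₁
      obtain ⟨hne₂, -, hci₂⟩ := hM₂
      by_cases hu : phiF M₁ = Finset.univ
      · rcases L4class hke hci₁ hu with h1 | h1
        · rcases L4class hke hci₂ (hp ▸ hu) with h2 | h2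
          · rw [h1, h2]
          · exact absurd h2 hne₂
        · exact absurd h1 hne₁
      · exact L3inj hci₁ hci₂ hp hu
    · intro S hS
      rw [Finset.mem_filter] at hS
      obtain ⟨M, hci, hphi⟩ := isPMS_iff.1 hS.2
      by_cases hO : M = Oset k
      · refine ⟨Eset k, ?_, ?_⟩
        · rw [Finset.mem_erase, Finset.mem_filter, Finset.mem_powerset]
          exact ⟨Eset_ne_Oset, Finset.subset_univ _, cycInd_Eset hke⟩
        · show phiF (Eset k) = S
          rw [phiF_Eset hke, ← hphi, hO, phiF_Oset hke]
      · refine ⟨M, ?_, hphi⟩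
        rw [Finset.mem_erase, Finset.mem_filter, Finset.mem_powerset]
        exact ⟨hO, Finset.subset_univ _, hci⟩
    · intro M hM
      rw [Finset.mem_erase, Finset.mem_filter, Finset.mem_powerset] at hM
      rw [phiF_card hM.2.2]
      congr 1
      omega
  have hOmem : Oset k ∈ (Finset.univ : Finset (Fin (k+4))).powerset.filter CycInd := by
    rw [Finset.mem_filter, Finset.mem_powerset]
    exact ⟨Finset.subset_univ _, cycInd_Oset hke⟩
  have hstep3 := Finset.add_sum_erase _ (fun M => (X : Polynomial ℤ) ^ M.card) hOmem
  rw [hstep1, ← hstep2]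
  have hcs : (∑ M ∈ ((Finset.univ : Finset (Fin (k+4))).powerset.filter CycInd).erase (Oset k),
      (X : Polynomial ℤ) ^ M.card) = csum (k + 4) - X ^ ((k + 4) / 2) := by
    rw [csum, ← hstep3, card_Oset hke]
    ring
  rw [hcs, csum_eq_ncyc, ncyc_eq, gsum_eq_hl, gsum_eq_hl]
  norm_num
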